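/- Let A be a nontrivial reduced commutative ring whose only idempotents are 0 and 1 (equivalently, whose prime spectrum is connected), let l be a field equipped with an injective ring homomorphism l → A making A an l-algebra, and let f ∈ A be integral over l. Then the l-subalgebra of A generated by f (Algebra.adjoin l {f}) is a field. -/

import Mathlib

/-- Auxiliary: in a reduced commutative ring with only trivial idempotents, any
nonzero element that is integral over a field `l` is a unit. -/
theorem aux_isUnit_of_integral
    {l B : Type*} [Field l] [CommRing B] [IsReduced B] [Algebra l B]
    (hidem : ∀ e : B, IsIdempotentElem e → e = 0 ∨ e = 1)
    (x : B) (hx : x ≠ 0) (h : IsIntegral l x) : IsUnit x := by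
  obtain ⟨p, hp0, hp⟩ := h
  have hpne : p ≠ 0 := hp0.ne_zero
  obtain ⟨q, hpq, hq⟩ := Polynomial.exists_eq_pow_rootMultiplicity_mul_and_not_dvd p hpne 0
  simp only [Polynomial.C_0, sub_zero, Polynomial.X_dvd_iff] at hpq hq
  set k := p.rootMultiplicity 0 with hk
  set w := Polynomial.aeval x q with hw
  have hxkw : x ^ k * w = 0 := by
    have haev : Polynomial.aeval x p = 0 := by rw [Polynomial.aeval_def]; exact hp
    rw [hpq, map_mul, Polynomial.aeval_X_pow] at haev
    exact haev
  have hxw : x * w = 0 := by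
    have hnil : IsNilpotent (x * w) := by
      refine ⟨k + 1, ?_⟩
      calc (x * w) ^ (k + 1) = (x ^ k * w) * (x * w ^ k) := by ring
        _ = 0 := by rw [hxkw, zero_mul]
    exact hnil.eq_zero
  set c : l := q.coeff 0 with hc
  have hce : (c : l) ≠ 0 := hq
  set s := Polynomial.aeval x q.divX with hs
  have hws : w = x * s + algebraMap l B c := by
    rw [hw, hs, hc]
    conv_lhs => rw [← Polynomial.X_mul_divX_add q]
    rw [map_add, map_mul, Polynomial.aeval_X, Polynomial.aeval_C]
  set i : B := algebraMap l B c⁻¹ with hi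
  have hic : i * algebraMap l B c = 1 := by
    rw [hi, ← map_mul, inv_mul_cancel₀ hce, map_one]
  set e : B := i * w with he
  have hww : w * w = algebraMap l B c * w := by
    nth_rewrite 1 [hws]
    rw [add_mul, mul_comm x s, mul_assoc, hxw, mul_zero, zero_add]
  have hidem_e : IsIdempotentElem e := by
    rw [IsIdempotentElem, he]
    linear_combination (i * i) * hww + (i * w) * hic
  rcases hidem e hidem_e with h0 | h1
  · have hw0 : w = 0 := by
      calc w = (algebraMap l B c * i) * w := by rw [mul_comm (algebraMap l B c) i, hic, one_mul]
        _ = algebraMap l B c * e := by rw [he]; ring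
        _ = 0 := by rw [h0, mul_zero]
    have h2 : x * s + algebraMap l B c = 0 := by rw [← hws]; exact hw0
    have : x * (-(i * s)) = 1 := by linear_combination (-i) * h2 + hic
    exact IsUnit.of_mul_eq_one _ this
  · exfalso
    apply hx
    calc x = x * e := by rw [h1, mul_one]
      _ = i * (x * w) := by rw [he]; ring
      _ = 0 := by rw [hxw, mul_zero]

/-- **Key algebraic step of Lemma 4.1.**
Let `A` be a nontrivial reduced commutative ring whose only idempotents are `0` and `1`,
let `l` be a field with an injective ring homomorphism into `A` making `A` an `l`-algebra,
and let `f ∈ A` be integral over `l`.  Then the `l`-subalgebra of `A` generated by `f`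
is a field. -/
theorem adjoin_integral_isField_of_connected_reduced
    {l A : Type*} [Field l] [CommRing A] [Nontrivial A] [IsReduced A]
    [Algebra l A]
    (hinj : Function.Injective (algebraMap l A))
    (hidem : ∀ e : A, IsIdempotentElem e → e = 0 ∨ e = 1)
    (f : A) (hf : IsIntegral l f) :
    IsField (Algebra.adjoin l {f}) := by
  set B := Algebra.adjoin l {f} with hB
  have hval : Function.Injective (B.val) := Subtype.val_injective
  have hred : IsReduced B := isReduced_of_injective (B.val : B →ₐ[l] A) hval
  have hidemB : ∀ e : B, IsIdempotentElem e → e = 0 ∨ e = 1 := by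
    intro e he
    have : IsIdempotentElem (e : A) := by
      have := congrArg (Subtype.val) he
      simpa [IsIdempotentElem] using this
    rcases hidem _ this with h | h
    · left; exact hval (by simpa using h)
    · right; exact hval (by simpa using h)
  have hfg : (Algebra.adjoin l {f}).toSubmodule.FG := hf.fg_adjoin_singleton
  have hint : ∀ x : B, IsIntegral l x := by
    intro x
    have hxA : IsIntegral l (B.val x) := IsIntegral.of_mem_of_fg _ hfg _ x.2
    exact (isIntegral_algHom_iff B.val hval).mp hxA
  refine ⟨⟨0, 1, ?_⟩, mul_comm, ?_⟩
  · intro h01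
    have : (0 : A) = 1 := by
      have := congrArg (Subtype.val) h01
      simpa using this
    exact zero_ne_one this
  · intro a ha
    obtain ⟨b, hb⟩ := (aux_isUnit_of_integral hidemB a ha (hint a)).exists_right_inv
    exact ⟨b, hb⟩
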